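/- Let ⟨C, ≻⟩ be a precommutative (Zinbiel) algebra with basis B, and let I be the ideal of the polynomial algebra k[B] generated by the set {(b ≻ a)c − (b ≻ c)a : a,b,c ∈ B} (where b ≻ a, b ≻ c are expanded as linear combinations of B via the Zinbiel product). For each b ∈ B, the map ⊢_b: k[B]/I → k[B]/I induced on monomials by ⊢_b(a·w) = (b ≻ a)·w (a ∈ B, w a monomial) is well-defined, i.e. ⊢_b maps I into I. -/

import Mathlib

open MvPolynomial

set_option maxHeartbeats 1000000 in
/-- Let `C` be a precommutative (Zinbiel) algebra with basis `B`, and `I` the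
ideal of `k[B]` generated by `{(b ≻ a)c - (b ≻ c)a : a, b, c ∈ B}` (elements of
`C` being expanded over `B` as linear polynomials). For every `b ∈ B`, the map
`⊢_b` induced on monomials by `⊢_b(a · w) = (b ≻ a) · w` is a well-defined
linear map on `k[B]/I`. -/
theorem vdash_well_defined {k C B : Type*} [Field k] [AddCommGroup C] [Module k C]
    (bas : Module.Basis B k C) (m : C →ₗ[k] C →ₗ[k] C)
    (hz : ∀ x y z : C, m (m x y + m y x) z = m x (m y z))
    (toPoly : C →ₗ[k] MvPolynomial B k)
    (htoPoly : ∀ c : C, toPoly c = (bas.repr c).sum fun x coef => MvPolynomial.C coef * X x)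
    (I : Ideal (MvPolynomial B k))
    (hI : I = Ideal.span { p | ∃ a b c : B,
      p = toPoly (m (bas b) (bas a)) * X c - toPoly (m (bas b) (bas c)) * X a }) :
    ∀ b : B, ∃ T : (MvPolynomial B k ⧸ I) →ₗ[k] (MvPolynomial B k ⧸ I),
      ∀ (a : B) (w : MvPolynomial B k),
        T (Ideal.Quotient.mk I (X a * w)) =
          Ideal.Quotient.mk I (toPoly (m (bas b) (bas a)) * w) := by
  intro b
  classical
  -- `toPoly` sends basis vectors to variables
  have tpbas : ∀ x : B, toPoly (bas x) = X x := by
    intro x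
    rw [htoPoly, bas.repr_self, Finsupp.sum_single_index]
    · rw [map_one, one_mul]
    · rw [map_zero, zero_mul]
  have hspan : ∀ w : C, w ∈ Submodule.span k (Set.range bas) := fun w => by
    rw [bas.span_eq]; trivial
  -- `mk` commutes with `k`-scalars
  have mk_smul : ∀ (c0 : k) (x : MvPolynomial B k),
      Ideal.Quotient.mk I (c0 • x) = c0 • Ideal.Quotient.mk I x := by
    intro c0 x
    rw [← Ideal.Quotient.mkₐ_eq_mk k I]
    exact map_smul (Ideal.Quotient.mkₐ k I).toLinearMap c0 x
  -- The generating relations extended multilinearly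
  have L3 : ∀ x y z : C,
      toPoly (m x y) * toPoly z - toPoly (m x z) * toPoly y ∈ I := by
    intro x
    refine Submodule.span_induction
      (p := fun x _ => ∀ y z : C,
        toPoly (m x y) * toPoly z - toPoly (m x z) * toPoly y ∈ I)
      ?_ ?_ ?_ ?_ (hspan x)
    · rintro _ ⟨b1, rfl⟩ y z
      revert z
      refine Submodule.span_induction
        (p := fun y _ => ∀ z : C,
          toPoly (m (bas b1) y) * toPoly z - toPoly (m (bas b1) z) * toPoly y ∈ I)
        ?_ ?_ ?_ ?_ (hspan y)
      · rintro _ ⟨a, rfl⟩ z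
        refine Submodule.span_induction
          (p := fun z _ =>
            toPoly (m (bas b1) (bas a)) * toPoly z
              - toPoly (m (bas b1) z) * toPoly (bas a) ∈ I)
          ?_ ?_ ?_ ?_ (hspan z)
        · rintro _ ⟨c, rfl⟩
          rw [tpbas, tpbas, hI]
          exact Ideal.subset_span ⟨a, b1, c, rfl⟩
        · simp
        · intro z1 z2 _ _ h1 h2
          have := I.add_mem h1 h2
          convert this using 1
          simp only [map_add]
          ring
        · intro c0 z1 _ h1
          have := I.smul_of_tower_mem c0 h1
          convert this using 1
          simp only [map_smul, smul_sub, smul_mul_assoc, mul_smul_comm]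
      · intro z; simp
      · intro y1 y2 _ _ h1 h2 z
        have := I.add_mem (h1 z) (h2 z)
        convert this using 1
        simp only [map_add]
        ring
      · intro c0 y1 _ h1 z
        have := I.smul_of_tower_mem c0 (h1 z)
        convert this using 1
        simp only [map_smul, smul_sub, smul_mul_assoc, mul_smul_comm]
    · intro y z; simp
    · intro x1 x2 _ _ h1 h2 y z
      have := I.add_mem (h1 y z) (h2 y z)
      convert this using 1
      simp only [map_add, LinearMap.add_apply]
      ring
    · intro c0 x1 _ h1 y z
      have := I.smul_of_tower_mem c0 (h1 y z)
      convert this using 1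
      simp only [map_smul, LinearMap.smul_apply, smul_sub, smul_mul_assoc]
  -- the Zinbiel chain
  have chain : ∀ a b1 c : B,
      toPoly (m (bas b) (bas c)) * toPoly (m (bas b1) (bas a))
        - toPoly (m (bas b) (bas a)) * toPoly (m (bas b1) (bas c)) ∈ I := by
    intro a b1 c
    have h1 := L3 (bas b) (bas c) (m (bas b1) (bas a))
    have h2 := L3 (m (bas b) (bas b1) + m (bas b1) (bas b)) (bas a) (bas c)
    have h3 := L3 (bas b) (m (bas b1) (bas c)) (bas a)
    rw [hz (bas b) (bas b1) (bas a), hz (bas b) (bas b1) (bas c)] at h2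
    have := I.add_mem (I.add_mem h1 h2) h3
    convert this using 1
    ring
  -- the value of the map on a monomial, with chosen leading variable
  set f : (B →₀ ℕ) → (MvPolynomial B k ⧸ I) := fun d =>
    if h : d.support.Nonempty then
      Ideal.Quotient.mk I (toPoly (m (bas b) (bas (Exists.choose h)))
        * monomial (d - Finsupp.single (Exists.choose h) 1) 1)
    else 0 with hf
  have hX : ∀ (s : B →₀ ℕ) (x : B),
      (monomial (s + Finsupp.single x 1) 1 : MvPolynomial B k)
        = monomial s 1 * X x := by
    intro s x
    rw [X, monomial_mul, mul_one]
  have hX' : ∀ (x : B) (s : B →₀ ℕ),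
      (X x * monomial s 1 : MvPolynomial B k)
        = monomial (Finsupp.single x 1 + s) 1 := by
    intro x s
    rw [X, monomial_mul, one_mul]
  -- independence of the choice of leading variable
  have indep : ∀ (d : B →₀ ℕ) (a a' : B), a ∈ d.support → a' ∈ d.support →
      Ideal.Quotient.mk I (toPoly (m (bas b) (bas a))
          * monomial (d - Finsupp.single a 1) 1)
        = Ideal.Quotient.mk I (toPoly (m (bas b) (bas a'))
          * monomial (d - Finsupp.single a' 1) 1) := by
    intro d a a' ha ha'
    rcases eq_or_ne a a' with rfl | hne
    · rfl
    have ha1 : 1 ≤ d a := Nat.one_le_iff_ne_zero.mpr (Finsupp.mem_support_iff.mp ha)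
    have ha'1 : 1 ≤ d a' := Nat.one_le_iff_ne_zero.mpr (Finsupp.mem_support_iff.mp ha')
    set e : B →₀ ℕ := d - Finsupp.single a 1 - Finsupp.single a' 1 with he
    have e1 : d - Finsupp.single a 1 = e + Finsupp.single a' 1 := by
      ext x
      rw [Finsupp.add_apply, Finsupp.tsub_apply, Finsupp.tsub_apply, Finsupp.tsub_apply]
      rcases eq_or_ne x a with rfl | hxa
      · rw [Finsupp.single_eq_same, Finsupp.single_eq_of_ne' (Ne.symm hne)]
        omega
      · rcases eq_or_ne x a' with rfl | hxa'
        · rw [Finsupp.single_eq_same, Finsupp.single_eq_of_ne' hne]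
          omega
        · rw [Finsupp.single_eq_of_ne' (Ne.symm hxa), Finsupp.single_eq_of_ne' (Ne.symm hxa')]
          omega
    have e2 : d - Finsupp.single a' 1 = e + Finsupp.single a 1 := by
      ext x
      rw [Finsupp.add_apply, Finsupp.tsub_apply, Finsupp.tsub_apply, Finsupp.tsub_apply]
      rcases eq_or_ne x a with rfl | hxa
      · rw [Finsupp.single_eq_same, Finsupp.single_eq_of_ne' (Ne.symm hne)]
        omega
      · rcases eq_or_ne x a' with rfl | hxa'
        · rw [Finsupp.single_eq_same, Finsupp.single_eq_of_ne' hne]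
          omega
        · rw [Finsupp.single_eq_of_ne' (Ne.symm hxa), Finsupp.single_eq_of_ne' (Ne.symm hxa')]
          omega
    rw [e1, e2, Ideal.Quotient.eq]
    have hgen : toPoly (m (bas b) (bas a)) * X a'
        - toPoly (m (bas b) (bas a')) * X a ∈ I := by
      rw [hI]; exact Ideal.subset_span ⟨a, b, a', rfl⟩
    have := I.mul_mem_right (monomial e 1) hgen
    convert this using 1
    rw [hX, hX]
    ring
  have fdef : ∀ (d : B →₀ ℕ) (a : B), a ∈ d.support →
      f d = Ideal.Quotient.mk I (toPoly (m (bas b) (bas a))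
        * monomial (d - Finsupp.single a 1) 1) := by
    intro d a ha
    have hne : d.support.Nonempty := ⟨a, ha⟩
    rw [hf]
    simp only [dif_pos hne]
    exact indep d _ a (Exists.choose_spec hne) ha
  -- the linear map on polynomials
  set T0 : MvPolynomial B k →ₗ[k] (MvPolynomial B k ⧸ I) :=
    (basisMonomials B k).constr k f with hT0
  have T0mon : ∀ d : B →₀ ℕ, T0 (monomial d 1) = f d := by
    intro d
    have hb : (monomial d 1 : MvPolynomial B k) = basisMonomials B k d := by
      rw [coe_basisMonomials]
    rw [hb, hT0, Module.Basis.constr_basis]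
  -- key computation: applying T0 to `toPoly u * X c * monomial d 1`
  have key2 : ∀ (u : C) (c : B) (d : B →₀ ℕ),
      T0 (toPoly u * X c * monomial d 1)
        = Ideal.Quotient.mk I (toPoly (m (bas b) (bas c))
            * (toPoly u * monomial d 1)) := by
    intro u
    refine Submodule.span_induction
      (p := fun u _ => ∀ (c : B) (d : B →₀ ℕ),
        T0 (toPoly u * X c * monomial d 1)
          = Ideal.Quotient.mk I (toPoly (m (bas b) (bas c))
              * (toPoly u * monomial d 1))) ?_ ?_ ?_ ?_ (hspan u)
    · rintro _ ⟨x, rfl⟩ c d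
      rw [tpbas]
      have hp : (X x * X c * monomial d 1 : MvPolynomial B k)
          = monomial (Finsupp.single x 1 + Finsupp.single c 1 + d) 1 := by
        rw [X, X, monomial_mul, monomial_mul]
        norm_num
      have hc : c ∈ (Finsupp.single x 1 + Finsupp.single c 1 + d).support := by
        rw [Finsupp.mem_support_iff, Finsupp.add_apply, Finsupp.add_apply,
          Finsupp.single_eq_same]
        omega
      have hsub : (Finsupp.single x 1 + Finsupp.single c 1 + d)
          - Finsupp.single c 1 = Finsupp.single x 1 + d := by
        rw [add_right_comm, add_tsub_cancel_right]
      rw [hp, T0mon, fdef _ c hc, hsub, hX' x d]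
    · intro c d; simp
    · intro u1 u2 _ _ h1 h2 c d
      have ht : toPoly (u1 + u2) = toPoly u1 + toPoly u2 := map_add toPoly u1 u2
      rw [ht,
        show (toPoly u1 + toPoly u2) * X c * monomial d 1
          = toPoly u1 * X c * monomial d 1 + toPoly u2 * X c * monomial d 1 from by
            ring,
        LinearMap.map_add, h1 c d, h2 c d,
        show toPoly (m (bas b) (bas c)) * ((toPoly u1 + toPoly u2) * monomial d 1)
          = toPoly (m (bas b) (bas c)) * (toPoly u1 * monomial d 1)
            + toPoly (m (bas b) (bas c)) * (toPoly u2 * monomial d 1) from by ring,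
        (Ideal.Quotient.mk I).map_add]
    · intro c0 u1 _ h1 c d
      have ht : toPoly (c0 • u1) = c0 • toPoly u1 := map_smul toPoly c0 u1
      rw [ht,
        show (c0 • toPoly u1) * X c * monomial d 1
          = c0 • (toPoly u1 * X c * monomial d 1) from by
            rw [smul_mul_assoc, smul_mul_assoc],
        LinearMap.map_smul, h1 c d,
        show toPoly (m (bas b) (bas c)) * ((c0 • toPoly u1) * monomial d 1)
          = c0 • (toPoly (m (bas b) (bas c)) * (toPoly u1 * monomial d 1)) from by
            rw [smul_mul_assoc, mul_smul_comm],
        mk_smul]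
  -- T0 kills multiples of I
  have hker : ∀ p ∈ I, ∀ q : MvPolynomial B k, T0 (q * p) = 0 := by
    intro p hp
    rw [hI] at hp
    refine Submodule.span_induction
      (p := fun p _ => ∀ q : MvPolynomial B k, T0 (q * p) = 0) ?_ ?_ ?_ ?_ hp
    · rintro _ ⟨a, b1, c, rfl⟩ q
      induction q using MvPolynomial.induction_on' with
      | monomial d c0 =>
        have hm : (monomial d c0 : MvPolynomial B k) = c0 • monomial d 1 := by
          rw [smul_monomial, smul_eq_mul, mul_one]
        rw [hm, smul_mul_assoc, LinearMap.map_smul]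
        have h0 : T0 (monomial d 1
            * (toPoly (m (bas b1) (bas a)) * X c
              - toPoly (m (bas b1) (bas c)) * X a)) = 0 := by
          rw [show (monomial d 1 : MvPolynomial B k)
              * (toPoly (m (bas b1) (bas a)) * X c
                - toPoly (m (bas b1) (bas c)) * X a)
              = toPoly (m (bas b1) (bas a)) * X c * monomial d 1
                - toPoly (m (bas b1) (bas c)) * X a * monomial d 1 from by ring]
          rw [LinearMap.map_sub, key2, key2, sub_eq_zero, Ideal.Quotient.eq]
          have := I.mul_mem_right (monomial d 1) (chain a b1 c)
          convert this using 1
          ring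
        rw [h0, smul_zero]
      | add q1 q2 hq1 hq2 =>
        rw [add_mul, LinearMap.map_add, hq1, hq2, add_zero]
    · intro q; rw [mul_zero, LinearMap.map_zero]
    · intro p1 p2 _ _ h1 h2 q
      rw [mul_add, LinearMap.map_add, h1, h2, add_zero]
    · intro r p1 _ h1 q
      rw [smul_eq_mul, show q * (r * p1) = (q * r) * p1 from by ring, h1]
  have hker' : Submodule.restrictScalars k I ≤ LinearMap.ker T0 := by
    intro p hp
    rw [LinearMap.mem_ker]
    have := hker p hp 1
    rwa [one_mul] at this
  set T1 := Submodule.liftQ (Submodule.restrictScalars k I) T0 hker' with hT1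
  set e := Submodule.Quotient.restrictScalarsEquiv k I with heq
  refine ⟨T1.comp e.symm.toLinearMap, ?_⟩
  have hTmk : ∀ x : MvPolynomial B k,
      T1 (e.symm (Ideal.Quotient.mk I x)) = T0 x := by
    intro x
    rw [← Ideal.Quotient.mk_eq_mk, heq,
      Submodule.Quotient.restrictScalarsEquiv_symm_mk, hT1, Submodule.liftQ_apply]
  intro a w
  simp only [LinearMap.comp_apply, LinearEquiv.coe_toLinearMap]
  rw [hTmk]
  induction w using MvPolynomial.induction_on' with
  | monomial d c0 =>
    have hm : (monomial d c0 : MvPolynomial B k) = c0 • monomial d 1 := by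
      rw [smul_monomial, smul_eq_mul, mul_one]
    rw [hm, mul_smul_comm, LinearMap.map_smul, mul_smul_comm, mk_smul]
    congr 1
    have ha : a ∈ (Finsupp.single a 1 + d).support := by
      rw [Finsupp.mem_support_iff, Finsupp.add_apply, Finsupp.single_eq_same]
      omega
    rw [hX' a d, T0mon, fdef _ a ha, add_tsub_cancel_left]
  | add w1 w2 hw1 hw2 =>
    rw [mul_add, LinearMap.map_add, hw1, hw2, mul_add, ← (Ideal.Quotient.mk I).map_add]
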